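/- Let κ_a > κ_e > 0 and set p₁ = -κ_a/(κ_a-κ_e), p₂ = -κ_e/(κ_a-κ_e). Define for τ > 0: Ψ(τ) = β/(1-β) - α/(1-α) and Φ(τ) = (1/(1-β)) g(τ)^{p₂} - (1/(1-α)) g(τ)^{p₁}, where α = e^{-κ_a τ}, β = e^{-κ_e τ}, g(τ) = κ_a(1-β)/(κ_e(1-α)). Then f(τ) = Φ(τ)/Ψ(τ) is continuous on (0, ∞), satisfies lim_{τ→0⁺} f(τ) = 1 and lim_{τ→∞} f(τ) = ∞, and hence its range contains (1, ∞). -/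

import Mathlib

open Filter Real Set Topology

lemma lim_ratio (k : ℝ) (hk : 0 < k) :
    Tendsto (fun τ => τ / (1 - Real.exp (-k * τ))) (𝓝[>] (0:ℝ)) (𝓝 k⁻¹) := by
  have hd : HasDerivAt (fun τ : ℝ => 1 - Real.exp (-k * τ)) k 0 := by
    have h := (Real.hasDerivAt_exp ((-k) * 0)).comp 0 ((hasDerivAt_id (0:ℝ)).const_mul (-k))
    have h2 := (hasDerivAt_const (0:ℝ) (1:ℝ)).sub h
    have h3 : HasDerivAt (fun τ : ℝ => 1 - Real.exp (-k * τ)) (0 - Real.exp (-k * 0) * (-k * 1)) 0 := h2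
    simpa using h3
  have hs := hasDerivAt_iff_tendsto_slope.mp hd
  have hs' : Tendsto (fun τ : ℝ => (1 - Real.exp (-k * τ)) / τ) (𝓝[≠] (0:ℝ)) (𝓝 k) := by
    refine hs.congr' ?_
    filter_upwards [self_mem_nhdsWithin] with τ hτ
    simp [slope_def_field]
  have hs'' : Tendsto (fun τ : ℝ => (1 - Real.exp (-k * τ)) / τ) (𝓝[>] (0:ℝ)) (𝓝 k) :=
    hs'.mono_left (nhdsWithin_mono _ (fun x hx => ne_of_gt hx))
  have := hs''.inv₀ hk.ne'
  simpa [inv_div] using this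

lemma exp_to_zero (k : ℝ) (hk : 0 < k) :
    Tendsto (fun τ : ℝ => Real.exp (-k * τ)) atTop (𝓝 0) := by
  have : Tendsto (fun τ : ℝ => -k * τ) atTop atBot :=
    tendsto_id.const_mul_atTop_of_neg (neg_lt_zero.mpr hk)
  exact Real.tendsto_exp_atBot.comp this

theorem ratio_range (κa κe : ℝ) (h1 : κa > κe) (h2 : κe > 0)
    (p₁ p₂ : ℝ) (hp1 : p₁ = -κa / (κa - κe)) (hp2 : p₂ = -κe / (κa - κe))
    (g Ψ Φ f : ℝ → ℝ)
    (hg : ∀ τ : ℝ, g τ =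
      κa * (1 - Real.exp (-κe * τ)) / (κe * (1 - Real.exp (-κa * τ))))
    (hΨ : ∀ τ : ℝ, Ψ τ =
      Real.exp (-κe * τ) / (1 - Real.exp (-κe * τ)) -
        Real.exp (-κa * τ) / (1 - Real.exp (-κa * τ)))
    (hΦ : ∀ τ : ℝ, Φ τ =
      (1 / (1 - Real.exp (-κe * τ))) * g τ ^ p₂ -
        (1 / (1 - Real.exp (-κa * τ))) * g τ ^ p₁)
    (hf : ∀ τ : ℝ, f τ = Φ τ / Ψ τ) :
    ContinuousOn f (Set.Ioi 0) ∧
    Filter.Tendsto f (nhdsWithin 0 (Set.Ioi 0)) (nhds 1) ∧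
    Filter.Tendsto f Filter.atTop Filter.atTop ∧
    Set.Ioi (1 : ℝ) ⊆ f '' Set.Ioi 0 := by
  have ha : (0:ℝ) < κa := lt_trans h2 h1
  -- pointwise facts for τ > 0
  have hA1 : ∀ τ : ℝ, 0 < τ → Real.exp (-κa * τ) < 1 := fun τ hτ =>
    Real.exp_lt_one_iff.mpr (by nlinarith)
  have hB1 : ∀ τ : ℝ, 0 < τ → Real.exp (-κe * τ) < 1 := fun τ hτ =>
    Real.exp_lt_one_iff.mpr (by nlinarith)
  have hAB : ∀ τ : ℝ, 0 < τ → Real.exp (-κa * τ) < Real.exp (-κe * τ) := fun τ hτ =>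
    Real.exp_lt_exp.mpr (by nlinarith)
  have hgpos : ∀ τ : ℝ, 0 < τ → 0 < g τ := by
    intro τ hτ
    rw [hg]
    have h3 := hA1 τ hτ
    have h4 := hB1 τ hτ
    exact div_pos (mul_pos ha (by linarith)) (mul_pos h2 (by linarith))
  have hΨpos : ∀ τ : ℝ, 0 < τ → 0 < Ψ τ := by
    intro τ hτ
    rw [hΨ]
    have h3 := hA1 τ hτ; have h4 := hB1 τ hτ; have h5 := hAB τ hτ
    have hEa := Real.exp_pos (-κa * τ); have hEb := Real.exp_pos (-κe * τ)
    rw [sub_pos, div_lt_div_iff₀ (by linarith) (by linarith)]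
    nlinarith
  -- continuity of Φ, Ψ, f on Ioi 0
  have hcA : Continuous (fun τ : ℝ => Real.exp (-κa * τ)) := by continuity
  have hcB : Continuous (fun τ : ℝ => Real.exp (-κe * τ)) := by continuity
  have hc1A : ∀ τ ∈ Set.Ioi (0:ℝ), (1 - Real.exp (-κa * τ)) ≠ 0 := fun τ hτ =>
    ne_of_gt (by linarith [hA1 τ hτ])
  have hc1B : ∀ τ ∈ Set.Ioi (0:ℝ), (1 - Real.exp (-κe * τ)) ≠ 0 := fun τ hτ =>
    ne_of_gt (by linarith [hB1 τ hτ])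
  have hcg : ContinuousOn g (Set.Ioi 0) := by
    have : ContinuousOn (fun τ : ℝ => κa * (1 - Real.exp (-κe * τ)) /
        (κe * (1 - Real.exp (-κa * τ)))) (Set.Ioi 0) := by
      apply ContinuousOn.div
      · exact (continuous_const.mul (continuous_const.sub hcB)).continuousOn
      · exact (continuous_const.mul (continuous_const.sub hcA)).continuousOn
      · intro τ hτ
        exact mul_ne_zero (ne_of_gt h2) (hc1A τ hτ)
    exact this.congr (fun τ _ => hg τ)
  have hcgp : ∀ p : ℝ, ContinuousOn (fun τ => g τ ^ p) (Set.Ioi 0) := fun p =>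
    hcg.rpow_const (fun τ hτ => Or.inl (ne_of_gt (hgpos τ hτ)))
  have hcΦ : ContinuousOn Φ (Set.Ioi 0) := by
    have : ContinuousOn (fun τ : ℝ => (1 / (1 - Real.exp (-κe * τ))) * g τ ^ p₂ -
        (1 / (1 - Real.exp (-κa * τ))) * g τ ^ p₁) (Set.Ioi 0) := by
      apply ContinuousOn.sub
      · exact (ContinuousOn.div continuousOn_const
          (continuous_const.sub hcB).continuousOn hc1B).mul (hcgp p₂)
      · exact (ContinuousOn.div continuousOn_const
          (continuous_const.sub hcA).continuousOn hc1A).mul (hcgp p₁)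
    exact this.congr (fun τ _ => hΦ τ)
  have hcΨ : ContinuousOn Ψ (Set.Ioi 0) := by
    have : ContinuousOn (fun τ : ℝ => Real.exp (-κe * τ) / (1 - Real.exp (-κe * τ)) -
        Real.exp (-κa * τ) / (1 - Real.exp (-κa * τ))) (Set.Ioi 0) := by
      apply ContinuousOn.sub
      · exact ContinuousOn.div hcB.continuousOn (continuous_const.sub hcB).continuousOn hc1B
      · exact ContinuousOn.div hcA.continuousOn (continuous_const.sub hcA).continuousOn hc1A
    exact this.congr (fun τ _ => hΨ τ)
  have hcf : ContinuousOn f (Set.Ioi 0) := by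
    have : ContinuousOn (fun τ => Φ τ / Ψ τ) (Set.Ioi 0) :=
      hcΦ.div hcΨ (fun τ hτ => ne_of_gt (hΨpos τ hτ))
    exact this.congr (fun τ _ => hf τ)
  -- limit at 0⁺
  have hRa := lim_ratio κa ha
  have hRb := lim_ratio κe h2
  have hg1 : Tendsto g (𝓝[>] (0:ℝ)) (𝓝 1) := by
    have h : Tendsto (fun τ : ℝ => (κa / κe) * ((1 - Real.exp (-κe * τ)) / τ *
        (τ / (1 - Real.exp (-κa * τ))))) (𝓝[>] (0:ℝ)) (𝓝 ((κa/κe) * (κe * κa⁻¹))) := by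
      have hb' : Tendsto (fun τ : ℝ => (1 - Real.exp (-κe * τ)) / τ) (𝓝[>] (0:ℝ)) (𝓝 κe) := by
        have := hRb.inv₀ (inv_ne_zero (ne_of_gt h2))
        simpa [inv_div] using this
      exact tendsto_const_nhds.mul (hb'.mul hRa)
    have heq : (κa/κe) * (κe * κa⁻¹) = 1 := by field_simp
    rw [heq] at h
    refine h.congr' ?_
    filter_upwards [self_mem_nhdsWithin] with τ hτ
    have hτ' : (τ:ℝ) ≠ 0 := ne_of_gt hτ
    rw [hg]
    field_simp
  have hgp1 : ∀ p : ℝ, Tendsto (fun τ => g τ ^ p) (𝓝[>] (0:ℝ)) (𝓝 1) := by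
    intro p
    have := hg1.rpow_const (p := p) (Or.inl one_ne_zero)
    simpa using this
  -- τ * Φ and τ * Ψ limits
  have hTΦ : Tendsto (fun τ => τ * Φ τ) (𝓝[>] (0:ℝ)) (𝓝 (κe⁻¹ - κa⁻¹)) := by
    have h : Tendsto (fun τ : ℝ => (τ / (1 - Real.exp (-κe * τ))) * g τ ^ p₂ -
        (τ / (1 - Real.exp (-κa * τ))) * g τ ^ p₁) (𝓝[>] (0:ℝ))
        (𝓝 (κe⁻¹ * 1 - κa⁻¹ * 1)) :=
      (hRb.mul (hgp1 p₂)).sub (hRa.mul (hgp1 p₁))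
    simp only [mul_one] at h
    refine h.congr' ?_
    filter_upwards [self_mem_nhdsWithin] with τ hτ
    rw [hΦ]
    ring
  have hTΨ : Tendsto (fun τ => τ * Ψ τ) (𝓝[>] (0:ℝ)) (𝓝 (κe⁻¹ - κa⁻¹)) := by
    have hb0 : Tendsto (fun τ : ℝ => Real.exp (-κe * τ)) (𝓝[>] (0:ℝ)) (𝓝 1) := by
      have : Tendsto (fun τ : ℝ => Real.exp (-κe * τ)) (𝓝 (0:ℝ)) (𝓝 1) := by
        have := hcB.tendsto (x := 0); simpa using this
      exact this.mono_left nhdsWithin_le_nhds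
    have ha0 : Tendsto (fun τ : ℝ => Real.exp (-κa * τ)) (𝓝[>] (0:ℝ)) (𝓝 1) := by
      have : Tendsto (fun τ : ℝ => Real.exp (-κa * τ)) (𝓝 (0:ℝ)) (𝓝 1) := by
        have := hcA.tendsto (x := 0); simpa using this
      exact this.mono_left nhdsWithin_le_nhds
    have h : Tendsto (fun τ : ℝ => (τ / (1 - Real.exp (-κe * τ))) * Real.exp (-κe * τ) -
        (τ / (1 - Real.exp (-κa * τ))) * Real.exp (-κa * τ)) (𝓝[>] (0:ℝ))
        (𝓝 (κe⁻¹ * 1 - κa⁻¹ * 1)) :=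
      (hRb.mul hb0).sub (hRa.mul ha0)
    simp only [mul_one] at h
    refine h.congr' ?_
    filter_upwards [self_mem_nhdsWithin] with τ hτ
    rw [hΨ]
    ring
  have hc0 : (κe⁻¹ - κa⁻¹ : ℝ) ≠ 0 := by
    have : κa⁻¹ < κe⁻¹ := by
      rw [inv_lt_inv₀ ha h2]; exact h1
    linarith
  have hlim0 : Tendsto f (𝓝[>] (0:ℝ)) (𝓝 1) := by
    have h := hTΦ.div hTΨ hc0
    have heq : (κe⁻¹ - κa⁻¹) / (κe⁻¹ - κa⁻¹) = (1:ℝ) := div_self hc0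
    rw [heq] at h
    refine h.congr' ?_
    filter_upwards [self_mem_nhdsWithin] with τ hτ
    have hτ' : (τ:ℝ) ≠ 0 := ne_of_gt hτ
    simp only [Pi.div_apply]
    rw [hf, mul_div_mul_left _ _ hτ']
  -- limit at ∞
  have hA0 := exp_to_zero κa ha
  have hB0 := exp_to_zero κe h2
  have hgT : Tendsto g atTop (𝓝 (κa / κe)) := by
    have h : Tendsto (fun τ : ℝ => κa * (1 - Real.exp (-κe * τ)) /
        (κe * (1 - Real.exp (-κa * τ)))) atTop (𝓝 (κa * (1 - 0) / (κe * (1 - 0)))) := by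
      exact ((tendsto_const_nhds.mul (tendsto_const_nhds.sub hB0)).div
        (tendsto_const_nhds.mul (tendsto_const_nhds.sub hA0))
        (by simpa using ne_of_gt h2))
    simp only [sub_zero, mul_one] at h
    exact (tendsto_congr (fun τ => (hg τ).symm)).mp h
  have hbase : (1:ℝ) < κa / κe := (one_lt_div h2).mpr h1
  have hbase0 : κa / κe ≠ 0 := by positivity
  have hΦT : Tendsto Φ atTop (𝓝 ((κa/κe) ^ p₂ - (κa/κe) ^ p₁)) := by
    have h : Tendsto (fun τ : ℝ => (1 / (1 - Real.exp (-κe * τ))) * g τ ^ p₂ -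
        (1 / (1 - Real.exp (-κa * τ))) * g τ ^ p₁) atTop
        (𝓝 ((1 / (1 - 0)) * (κa/κe) ^ p₂ - (1 / (1 - 0)) * (κa/κe) ^ p₁)) := by
      refine Filter.Tendsto.sub ?_ ?_
      · exact (tendsto_const_nhds.div (tendsto_const_nhds.sub hB0) (by norm_num)).mul
          (hgT.rpow_const (Or.inl hbase0))
      · exact (tendsto_const_nhds.div (tendsto_const_nhds.sub hA0) (by norm_num)).mul
          (hgT.rpow_const (Or.inl hbase0))
    simp only [sub_zero, div_one, one_mul] at h
    exact (tendsto_congr (fun τ => (hΦ τ).symm)).mp h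
  have hplt : p₁ < p₂ := by
    have hd : (0:ℝ) < κa - κe := by linarith
    rw [hp1, hp2, div_lt_div_iff₀ hd hd]
    nlinarith
  have hLpos : (0:ℝ) < (κa/κe) ^ p₂ - (κa/κe) ^ p₁ := by
    rw [sub_pos]
    exact (Real.rpow_lt_rpow_left_iff hbase).mpr hplt
  have hΨT0 : Tendsto Ψ atTop (𝓝 0) := by
    have h : Tendsto (fun τ : ℝ => Real.exp (-κe * τ) / (1 - Real.exp (-κe * τ)) -
        Real.exp (-κa * τ) / (1 - Real.exp (-κa * τ))) atTop
        (𝓝 (0 / (1 - 0) - 0 / (1 - 0))) :=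
      (hB0.div (tendsto_const_nhds.sub hB0) (by norm_num)).sub
        (hA0.div (tendsto_const_nhds.sub hA0) (by norm_num))
    norm_num at h
    exact Tendsto.congr (fun τ => by rw [hΨ]; ring_nf) h
  have hΨT : Tendsto Ψ atTop (𝓝[>] (0:ℝ)) := by
    apply tendsto_nhdsWithin_of_tendsto_nhds_of_eventually_within _ hΨT0
    filter_upwards [eventually_gt_atTop (0:ℝ)] with τ hτ
    exact hΨpos τ hτ
  have hinv : Tendsto (fun τ => (Ψ τ)⁻¹) atTop atTop := by
    have := hΨT.inv_tendsto_nhdsGT_zero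
    exact this
  have hlimT : Tendsto f atTop atTop := by
    have h := hΦT.pos_mul_atTop hLpos hinv
    refine h.congr (fun τ => ?_)
    rw [hf, div_eq_mul_inv]
  refine ⟨hcf, hlim0, hlimT, ?_⟩
  have hl1 : (𝓝[>] (0:ℝ)) ≤ 𝓟 (Set.Ioi (0:ℝ)) := le_principal_iff.mpr self_mem_nhdsWithin
  exact isPreconnected_Ioi.intermediate_value_Ioi hl1
    (le_principal_iff.mpr (Ioi_mem_atTop 0)) hcf hlim0 hlimT
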